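/- The operator √d·L has order dividing 4d: (√d·L)^{4d} = Id, the identity operator on ℂ^{ℤ_d×ℤ_d}. -/

import Mathlib

open Matrix Complex

/-- `ω = exp(2πi/d)`, a primitive `d`-th root of unity. -/
noncomputable def omegaRoot (d : ℕ) : ℂ := Complex.exp (2 * Real.pi * Complex.I / d)

/-- `μ = exp(2πi/(2d))`. -/
noncomputable def muRoot (d : ℕ) : ℂ := Complex.exp (2 * Real.pi * Complex.I / (2 * d))

/-- The cyclic shift matrix `S`, `S_{jk} = δ_{j,k+1}`. -/
def Smat (d : ℕ) [NeZero d] : Matrix (ZMod d) (ZMod d) ℂ :=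
  Matrix.of fun j k => if j = k + 1 then 1 else 0

/-- The modulation matrix `Ω`, `Ω_{jk} = ω^j δ_{jk}`. -/
noncomputable def Omat (d : ℕ) [NeZero d] : Matrix (ZMod d) (ZMod d) ℂ :=
  Matrix.of fun j k => if j = k then omegaRoot d ^ j.val else 0

/-- The Fourier matrix `F`, `F_{jk} = ω^{jk}/√d`. -/
noncomputable def Fmat (d : ℕ) [NeZero d] : Matrix (ZMod d) (ZMod d) ℂ :=
  Matrix.of fun j k => omegaRoot d ^ (j.val * k.val) / (Real.sqrt d : ℂ)

/-- The diagonal matrix `R`, `R_{jj} = μ^{j(j+d)}`. -/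
noncomputable def Rmat (d : ℕ) [NeZero d] : Matrix (ZMod d) (ZMod d) ℂ :=
  Matrix.of fun j k => if j = k then muRoot d ^ (j.val * (j.val + d)) else 0

/-- The operator `L`, `Lc = (1/d) Σ_{j,k} c_{jk} S^{-j} Ω^{-k}`. -/
noncomputable def Lop (d : ℕ) [NeZero d] (c : Matrix (ZMod d) (ZMod d) ℂ) :
    Matrix (ZMod d) (ZMod d) ℂ :=
  (1 / (d : ℂ)) • ∑ j : ZMod d, ∑ k : ZMod d, c j k • ((Smat d ^ j.val)⁻¹ * (Omat d ^ k.val)⁻¹)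

noncomputable def chi (d : ℕ) [NeZero d] (x : ZMod d) : ℂ := omegaRoot d ^ x.val

noncomputable def Pop (d : ℕ) [NeZero d] (c : Matrix (ZMod d) (ZMod d) ℂ) :
    Matrix (ZMod d) (ZMod d) ℂ :=
  Matrix.of fun m n => ∑ k : ZMod d, chi d (-(n * k)) * c (n - m) k

section Aux
variable (d : ℕ) [NeZero d]

lemma omega_prim : IsPrimitiveRoot (omegaRoot d) d := by
  simpa [omegaRoot] using Complex.isPrimitiveRoot_exp d (NeZero.ne d)

lemma omega_pow_d : omegaRoot d ^ d = 1 := (omega_prim d).pow_eq_one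

lemma chi_natCast (a : ℕ) : chi d (a : ZMod d) = omegaRoot d ^ a := by
  rw [chi, ZMod.val_natCast]
  conv_rhs => rw [← Nat.div_add_mod a d, pow_add, pow_mul, omega_pow_d, one_pow, one_mul]

lemma chi_zero : chi d 0 = 1 := by
  simpa using chi_natCast d 0

lemma chi_add (x y : ZMod d) : chi d (x + y) = chi d x * chi d y := by
  have h : x + y = ((x.val + y.val : ℕ) : ZMod d) := by
    push_cast [ZMod.natCast_val, ZMod.cast_id]
    rfl
  rw [h, chi_natCast, pow_add, chi, chi]

lemma chi_pow (x : ZMod d) (a : ℕ) : chi d x ^ a = chi d ((a : ZMod d) * x) := by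
  induction a with
  | zero => simp [chi_zero]
  | succ a ih =>
    rw [pow_succ, ih, ← chi_add]
    congr 1
    push_cast
    ring

lemma chi_ne_one {x : ZMod d} (hx : x ≠ 0) : chi d x ≠ 1 := by
  have h1 : 0 < x.val := by
    rcases Nat.eq_zero_or_pos x.val with h | h
    · exact absurd (by rwa [← ZMod.val_eq_zero]) hx
    · exact h
  exact (omega_prim d).pow_ne_one_of_pos_of_lt h1.ne' (ZMod.val_lt x)

lemma sum_chi (x : ZMod d) : ∑ k : ZMod d, chi d (k * x) = if x = 0 then (d : ℂ) else 0 := by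
  split_ifs with h
  · simp [h, chi_zero, ZMod.card]
  · have key : chi d x * ∑ k : ZMod d, chi d (k * x) = ∑ k : ZMod d, chi d (k * x) := by
      rw [Finset.mul_sum]
      refine Fintype.sum_bijective (· + (1 : ZMod d)) (Equiv.addRight (1:ZMod d)).bijective _ _ ?_
      intro k
      rw [← chi_add]
      congr 1
      ring
    have := sub_eq_zero.mpr key
    rw [← sub_one_mul] at this
    rcases mul_eq_zero.mp this with h1 | h1
    · exact absurd (sub_eq_zero.mp h1) (chi_ne_one d h)
    · exact h1

lemma Smat_pow (a : ℕ) :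
    Smat d ^ a = Matrix.of fun j k => if j = k + (a : ZMod d) then 1 else 0 := by
  induction a with
  | zero => ext j k; simp [Matrix.one_apply]
  | succ a ih =>
    rw [pow_succ, ih]
    ext j k
    have hc : ∀ m : ZMod d, (m = k + 1) = (m = k + 1) := fun _ => rfl
    simp only [Matrix.mul_apply, Matrix.of_apply, Smat, ite_mul, one_mul, zero_mul,
      mul_ite, mul_one, mul_zero]
    rw [Finset.sum_ite_eq' Finset.univ (k + 1) (fun m => if j = m + (a : ZMod d) then (1:ℂ) else 0)]
    simp only [Finset.mem_univ, if_true]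
    rw [show k + 1 + (a : ZMod d) = k + ((a:ℕ) + 1 : ℕ) by push_cast; ring]

lemma Smat_pow_inv (a : ℕ) :
    (Smat d ^ a)⁻¹ = Matrix.of fun j k => if k = j + (a : ZMod d) then 1 else 0 := by
  apply Matrix.inv_eq_right_inv
  rw [Smat_pow]
  ext j k
  simp only [Matrix.mul_apply, Matrix.of_apply, ite_mul, one_mul, zero_mul,
    Matrix.one_apply]
  have hrw : ∀ m : ZMod d, (j = m + (a : ZMod d)) = (m = j - (a : ZMod d)) := by
    intro m
    simp only [eq_iff_iff]
    constructor <;> intro h <;> (rw [h]; ring)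
  simp only [hrw]
  rw [Finset.sum_ite_eq' Finset.univ (j - (a:ZMod d)) (fun m => if k = m + (a:ZMod d) then (1:ℂ) else 0)]
  simp only [Finset.mem_univ, if_true, sub_add_cancel]
  simp [eq_comm]

lemma Omat_pow (a : ℕ) :
    Omat d ^ a = Matrix.of fun j k => if j = k then chi d j ^ a else 0 := by
  induction a with
  | zero => ext j k; simp [Matrix.one_apply]
  | succ a ih =>
    rw [pow_succ, ih]
    ext j k
    simp only [Matrix.mul_apply, Matrix.of_apply, Omat, ite_mul, zero_mul, mul_ite, mul_zero]
    rw [Finset.sum_ite_eq' Finset.univ k (fun m => if j = m then chi d j ^ a * omegaRoot d ^ m.val else 0)]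
    simp only [Finset.mem_univ, if_true]
    split_ifs with h
    · rw [pow_succ, h]; rfl
    · rfl

lemma Omat_pow_inv (a : ℕ) :
    (Omat d ^ a)⁻¹ = Matrix.of fun j k => if j = k then chi d (-j) ^ a else 0 := by
  apply Matrix.inv_eq_right_inv
  rw [Omat_pow]
  ext j k
  simp only [Matrix.mul_apply, Matrix.of_apply, ite_mul, zero_mul, mul_ite, mul_zero,
    Matrix.one_apply]
  rw [Finset.sum_ite_eq' Finset.univ k (fun m => if j = m then chi d j ^ a * chi d (-m) ^ a else 0)]
  simp only [Finset.mem_univ, if_true]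
  split_ifs with h
  · rw [h, ← mul_pow, ← chi_add, add_neg_cancel, chi_zero, one_pow]
  · rfl

lemma chi_congr {x y : ZMod d} (h : x = y) : chi d x = chi d y := by rw [h]

lemma SO_apply (a b : ℕ) (m n : ZMod d) :
    ((Smat d ^ a)⁻¹ * (Omat d ^ b)⁻¹) m n
      = if n = m + (a : ZMod d) then chi d (-n) ^ b else 0 := by
  rw [Smat_pow_inv, Omat_pow_inv]
  simp only [Matrix.mul_apply, Matrix.of_apply, ite_mul, one_mul, zero_mul, mul_ite, mul_zero]
  rw [Finset.sum_ite_eq' Finset.univ n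
    (fun q => if q = m + (a:ZMod d) then chi d (-q) ^ b else 0)]
  simp only [Finset.mem_univ, if_true]

lemma Lop_apply (c : Matrix (ZMod d) (ZMod d) ℂ) (m n : ZMod d) :
    Lop d c m n = (1 / (d:ℂ)) * ∑ k : ZMod d, chi d (-(n * k)) * c (n - m) k := by
  rw [Lop]
  simp only [Matrix.smul_apply, Matrix.sum_apply, Matrix.smul_apply, smul_eq_mul]
  congr 1
  have hval : ∀ x : ZMod d, ((x.val : ℕ) : ZMod d) = x := by
    intro x; simp [ZMod.natCast_val, ZMod.cast_id]
  have step : ∀ j k : ZMod d,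
      c j k * ((Smat d ^ j.val)⁻¹ * (Omat d ^ k.val)⁻¹) m n
        = if j = n - m then chi d (-(n*k)) * c (n - m) k else 0 := by
    intro j k
    rw [SO_apply, hval]
    by_cases h : n = m + j
    · rw [if_pos h, if_pos (by rw [h]; ring)]
      rw [chi_pow, hval]
      rw [show j = n - m by rw [h]; ring]
      rw [mul_comm]
      congr 1
      exact chi_congr d (by ring)
    · rw [if_neg h, if_neg (fun hh => h (by rw [hh]; ring)), mul_zero]
  calc ∑ j : ZMod d, ∑ k : ZMod d, c j k * ((Smat d ^ j.val)⁻¹ * (Omat d ^ k.val)⁻¹) m n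
      = ∑ j : ZMod d, ∑ k : ZMod d, if j = n - m then chi d (-(n*k)) * c (n - m) k else 0 := by
        exact Finset.sum_congr rfl fun j _ => Finset.sum_congr rfl fun k _ => step j k
    _ = ∑ j : ZMod d, if j = n - m then ∑ k : ZMod d, chi d (-(n*k)) * c (n - m) k else 0 := by
        refine Finset.sum_congr rfl fun j _ => ?_
        split_ifs <;> simp
    _ = ∑ k : ZMod d, chi d (-(n*k)) * c (n - m) k := by
        rw [Finset.sum_ite_eq' Finset.univ (n - m)]
        simp

lemma Pop_two (c : Matrix (ZMod d) (ZMod d) ℂ) (m n : ZMod d) :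
    Pop d (Pop d c) m n
      = ∑ p : ZMod d, ∑ l : ZMod d, chi d (-((p + n - m) * (n + l))) * c p l := by
  simp only [Pop, Matrix.of_apply, Finset.mul_sum]
  refine (Fintype.sum_bijective (· + (n - m)) (Equiv.addRight (n - m)).bijective _ _ ?_).symm
  intro p
  refine Finset.sum_congr rfl fun l _ => ?_
  have h1 : p + (n - m) - (n - m) = p := by ring
  rw [h1, ← mul_assoc, ← chi_add]
  congr 1
  exact chi_congr d (by beta_reduce; ring)

lemma Pop_four (c : Matrix (ZMod d) (ZMod d) ℂ) (m n : ZMod d) :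
    Pop d (Pop d (Pop d (Pop d c))) m n
      = (d : ℂ) * ∑ k : ZMod d, ∑ q : ZMod d, chi d (k * (m - q) - k * k) * c q n := by
  rw [Pop_two]
  calc
    ∑ p : ZMod d, ∑ l : ZMod d,
        chi d (-((p + n - m) * (n + l))) * (Pop d (Pop d c)) p l
      = ∑ p : ZMod d, ∑ l : ZMod d, ∑ q : ZMod d, ∑ r : ZMod d,
          chi d (p * (r - n)) *
            (chi d (-((n - m) * (n + l)) - (q + l) * (l + r)) * c q r) := by
        refine Finset.sum_congr rfl fun p _ => Finset.sum_congr rfl fun l _ => ?_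
        rw [Pop_two, Finset.mul_sum]
        refine Finset.sum_congr rfl fun q _ => ?_
        rw [Finset.mul_sum]
        refine Finset.sum_congr rfl fun r _ => ?_
        rw [← mul_assoc, ← mul_assoc, ← chi_add, ← chi_add]
        congr 2
        ring
    _ = ∑ l : ZMod d, ∑ q : ZMod d, ∑ r : ZMod d,
          (if r - n = 0 then (d : ℂ) else 0) *
            (chi d (-((n - m) * (n + l)) - (q + l) * (l + r)) * c q r) := by
        rw [Finset.sum_comm]
        refine Finset.sum_congr rfl fun l _ => ?_
        rw [Finset.sum_comm]
        refine Finset.sum_congr rfl fun q _ => ?_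
        rw [Finset.sum_comm]
        refine Finset.sum_congr rfl fun r _ => ?_
        rw [← Finset.sum_mul, sum_chi]
    _ = ∑ l : ZMod d, ∑ q : ZMod d,
          (d : ℂ) * (chi d (-((n - m) * (n + l)) - (q + l) * (l + n)) * c q n) := by
        refine Finset.sum_congr rfl fun l _ => Finset.sum_congr rfl fun q _ => ?_
        simp only [sub_eq_zero, ite_mul, zero_mul]
        rw [Finset.sum_ite_eq' Finset.univ n
          (fun r => (d:ℂ) * (chi d (-((n - m) * (n + l)) - (q + l) * (l + r)) * c q r))]
        simp
    _ = (d : ℂ) * ∑ k : ZMod d, ∑ q : ZMod d, chi d (k * (m - q) - k * k) * c q n := by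
        rw [Finset.mul_sum]
        refine (Fintype.sum_bijective (· - n) (Equiv.subRight n).bijective _ _ ?_).symm
        intro k
        rw [Finset.mul_sum]
        refine Finset.sum_congr rfl fun q _ => ?_
        refine congrArg (fun z => (d:ℂ) * (z * c q n)) (chi_congr d ?_)
        beta_reduce
        ring

lemma key (τ : ZMod d) (c : Matrix (ZMod d) (ZMod d) ℂ) (m n : ZMod d) :
    ∑ k : ZMod d, ∑ q : ZMod d, chi d (k * (m - q) - k * k) *
        (∑ k' : ZMod d, ∑ q' : ZMod d, chi d (k' * (q - q') - τ * (k' * k')) * c q' n)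
      = (d : ℂ) * ∑ k : ZMod d, ∑ q' : ZMod d,
          chi d (k * (m - q') - (τ + 1) * (k * k)) * c q' n := by
  calc
    ∑ k : ZMod d, ∑ q : ZMod d, chi d (k * (m - q) - k * k) *
        (∑ k' : ZMod d, ∑ q' : ZMod d, chi d (k' * (q - q') - τ * (k' * k')) * c q' n)
      = ∑ k : ZMod d, ∑ q : ZMod d, ∑ k' : ZMod d, ∑ q' : ZMod d,
          chi d (q * (k' - k)) *
            (chi d (k * m - k * k - k' * q' - τ * (k' * k')) * c q' n) := by
        refine Finset.sum_congr rfl fun k _ => Finset.sum_congr rfl fun q _ => ?_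
        rw [Finset.mul_sum]
        refine Finset.sum_congr rfl fun k' _ => ?_
        rw [Finset.mul_sum]
        refine Finset.sum_congr rfl fun q' _ => ?_
        have hmerge : ∀ (u v : ZMod d) (z : ℂ),
            chi d u * (chi d v * z) = chi d (u + v) * z := by
          intro u v z; rw [chi_add d]; ring
        rw [hmerge, hmerge]
        exact congrArg (fun z => z * c q' n) (chi_congr d (by ring))
    _ = ∑ k : ZMod d, ∑ q' : ZMod d, ∑ k' : ZMod d, ∑ q : ZMod d,
          chi d (q * (k' - k)) *
            (chi d (k * m - k * k - k' * q' - τ * (k' * k')) * c q' n) := by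
        refine Finset.sum_congr rfl fun k _ => ?_
        calc
          ∑ q : ZMod d, ∑ k' : ZMod d, ∑ q' : ZMod d, chi d (q * (k' - k)) *
              (chi d (k * m - k * k - k' * q' - τ * (k' * k')) * c q' n)
            = ∑ q : ZMod d, ∑ q' : ZMod d, ∑ k' : ZMod d, chi d (q * (k' - k)) *
              (chi d (k * m - k * k - k' * q' - τ * (k' * k')) * c q' n) := by
              exact Finset.sum_congr rfl fun q _ => Finset.sum_comm
          _ = ∑ q' : ZMod d, ∑ q : ZMod d, ∑ k' : ZMod d, chi d (q * (k' - k)) *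
              (chi d (k * m - k * k - k' * q' - τ * (k' * k')) * c q' n) :=
              Finset.sum_comm
          _ = ∑ q' : ZMod d, ∑ k' : ZMod d, ∑ q : ZMod d, chi d (q * (k' - k)) *
              (chi d (k * m - k * k - k' * q' - τ * (k' * k')) * c q' n) :=
              Finset.sum_congr rfl fun q' _ => Finset.sum_comm
    _ = ∑ k : ZMod d, ∑ q' : ZMod d, ∑ k' : ZMod d,
          (if k' - k = 0 then (d : ℂ) else 0) *
            (chi d (k * m - k * k - k' * q' - τ * (k' * k')) * c q' n) := by
        refine Finset.sum_congr rfl fun k _ => Finset.sum_congr rfl fun q' _ =>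
          Finset.sum_congr rfl fun k' _ => ?_
        rw [← Finset.sum_mul, sum_chi]
    _ = ∑ k : ZMod d, ∑ q' : ZMod d,
          (d : ℂ) * (chi d (k * m - k * k - k * q' - τ * (k * k)) * c q' n) := by
        refine Finset.sum_congr rfl fun k _ => Finset.sum_congr rfl fun q' _ => ?_
        simp only [sub_eq_zero, ite_mul, zero_mul]
        rw [Finset.sum_ite_eq' Finset.univ k
          (fun k' => (d:ℂ) * (chi d (k * m - k * k - k' * q' - τ * (k' * k')) * c q' n))]
        simp
    _ = (d : ℂ) * ∑ k : ZMod d, ∑ q' : ZMod d,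
          chi d (k * (m - q') - (τ + 1) * (k * k)) * c q' n := by
        rw [Finset.mul_sum]
        refine Finset.sum_congr rfl fun k _ => ?_
        rw [Finset.mul_sum]
        refine Finset.sum_congr rfl fun q' _ => ?_
        refine congrArg (fun z => (d:ℂ) * (z * c q' n)) (chi_congr d ?_).symm
        ring

lemma Pop4_iter (t : ℕ) (ht : 1 ≤ t) (c : Matrix (ZMod d) (ZMod d) ℂ) (m n : ZMod d) :
    (fun a => Pop d (Pop d (Pop d (Pop d a))))^[t] c m n
      = (d : ℂ)^(2*t-1) * ∑ k : ZMod d, ∑ q : ZMod d,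
          chi d (k * (m - q) - (t : ZMod d) * (k * k)) * c q n := by
  induction t, ht using Nat.le_induction generalizing m with
  | base =>
    rw [Function.iterate_one, Pop_four]
    norm_num
  | succ t ht' ih =>
    · rw [Function.iterate_succ_apply', Pop_four]
      have hin : ∀ q : ZMod d,
          ((fun a => Pop d (Pop d (Pop d (Pop d a))))^[t] c) q n
            = (d : ℂ)^(2*t-1) * ∑ k' : ZMod d, ∑ q' : ZMod d,
              chi d (k' * (q - q') - (t : ZMod d) * (k' * k')) * c q' n :=
        fun q => ih q
      calc
        (d:ℂ) * ∑ k : ZMod d, ∑ q : ZMod d, chi d (k * (m - q) - k * k) *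
            ((fun a => Pop d (Pop d (Pop d (Pop d a))))^[t] c) q n
          = (d:ℂ) * ((d : ℂ)^(2*t-1) *
              ∑ k : ZMod d, ∑ q : ZMod d, chi d (k * (m - q) - k * k) *
                (∑ k' : ZMod d, ∑ q' : ZMod d,
                  chi d (k' * (q - q') - (t : ZMod d) * (k' * k')) * c q' n)) := by
            congr 1
            rw [Finset.mul_sum]
            refine Finset.sum_congr rfl fun k _ => ?_
            rw [Finset.mul_sum]
            refine Finset.sum_congr rfl fun q _ => ?_
            rw [hin q]
            ring
        _ = (d:ℂ) * ((d : ℂ)^(2*t-1) * ((d:ℂ) * ∑ k : ZMod d, ∑ q' : ZMod d,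
              chi d (k * (m - q') - ((t : ZMod d) + 1) * (k * k)) * c q' n)) := by
            rw [key]
        _ = (d : ℂ)^(2*(t+1)-1) * ∑ k : ZMod d, ∑ q : ZMod d,
              chi d (k * (m - q) - ((t+1 : ℕ) : ZMod d) * (k * k)) * c q n := by
            rw [show (((t+1 : ℕ)) : ZMod d) = (t : ZMod d) + 1 by push_cast; ring]
            rw [show 2*(t+1)-1 = (2*t-1) + 2 by omega]
            rw [pow_add]
            ring

lemma sLop_eq (c : Matrix (ZMod d) (ZMod d) ℂ) :
    ((Real.sqrt d : ℝ) : ℂ) • Lop d c = (((Real.sqrt d : ℝ) : ℂ) / d) • Pop d c := by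
  ext m n
  simp only [Matrix.smul_apply, smul_eq_mul, Lop_apply, Pop, Matrix.of_apply]
  ring

lemma Pop_smul (r : ℂ) (c : Matrix (ZMod d) (ZMod d) ℂ) :
    Pop d (r • c) = r • Pop d c := by
  ext m n
  simp only [Pop, Matrix.of_apply, Matrix.smul_apply, smul_eq_mul, Finset.mul_sum]
  exact Finset.sum_congr rfl fun k _ => by ring

lemma iter_smul_aux {α : Type*} [AddCommMonoid α] [Module ℂ α]
    (f : α → α) (hf : ∀ (r : ℂ) (c : α), f (r • c) = r • f c) (s : ℂ) (t : ℕ) (x : α) :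
    f^[t] (s • x) = s • f^[t] x := by
  induction t generalizing x with
  | zero => simp
  | succ t ih2 => rw [Function.iterate_succ_apply, hf, ih2, ← Function.iterate_succ_apply]

lemma iter_smul {α : Type*} [AddCommMonoid α] [Module ℂ α]
    (f : α → α) (hf : ∀ (r : ℂ) (c : α), f (r • c) = r • f c) (r : ℂ) (t : ℕ) (c : α) :
    (fun a => r • f a)^[t] c = r ^ t • f^[t] c := by
  induction t generalizing c with
  | zero => simp
  | succ t ih =>
    rw [Function.iterate_succ_apply, Function.iterate_succ_apply, ih,
      iter_smul_aux f hf, smul_smul, pow_succ]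

end Aux

theorem stmt11 (d : ℕ) [NeZero d] (hd : 2 ≤ d) (c : Matrix (ZMod d) (ZMod d) ℂ) :
    (fun a => ((Real.sqrt d : ℝ) : ℂ) • Lop d a)^[4 * d] c = c := by
  have hdC : (d : ℂ) ≠ 0 := Nat.cast_ne_zero.mpr (NeZero.ne d)
  have hfun : (fun a : Matrix (ZMod d) (ZMod d) ℂ => ((Real.sqrt d : ℝ) : ℂ) • Lop d a)
      = fun a => (((Real.sqrt d : ℝ) : ℂ) / d) • Pop d a := funext (sLop_eq d)
  rw [hfun, iter_smul (Pop d) (Pop_smul d)]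
  have h4f : (Pop d)^[4] = (fun a => Pop d (Pop d (Pop d (Pop d a)))) := by
    funext a; rfl
  rw [Function.iterate_mul, h4f]
  ext m n
  rw [Matrix.smul_apply, Pop4_iter d d (by omega) c m n]
  have hzero : ((d : ℕ) : ZMod d) = 0 := ZMod.natCast_self d
  have hsum : ∑ k : ZMod d, ∑ q : ZMod d,
      chi d (k * (m - q) - ((d:ℕ) : ZMod d) * (k * k)) * c q n = (d : ℂ) * c m n := by
    rw [Finset.sum_comm]
    have hq : ∀ q : ZMod d, ∑ k : ZMod d,
        chi d (k * (m - q) - ((d:ℕ) : ZMod d) * (k * k)) * c q n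
          = (if m - q = 0 then (d:ℂ) else 0) * c q n := by
      intro q
      rw [← Finset.sum_mul, ← sum_chi d (m - q)]
      congr 1
      refine Finset.sum_congr rfl fun k _ => ?_
      rw [hzero]
      ring_nf
    calc ∑ q : ZMod d, ∑ k : ZMod d,
          chi d (k * (m - q) - ((d:ℕ) : ZMod d) * (k * k)) * c q n
        = ∑ q : ZMod d, (if m - q = 0 then (d:ℂ) else 0) * c q n :=
          Finset.sum_congr rfl fun q _ => hq q
      _ = (d : ℂ) * c m n := by
          simp only [sub_eq_zero, ite_mul, zero_mul]
          rw [Finset.sum_ite_eq Finset.univ m (fun q => (d:ℂ) * c q n)]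
          simp
  rw [hsum]
  have hs2 : ((Real.sqrt d : ℝ) : ℂ) ^ 2 = (d : ℂ) := by
    rw [← Complex.ofReal_pow, Real.sq_sqrt (by positivity : (0:ℝ) ≤ d)]
    simp
  have hpow : (((Real.sqrt d : ℝ) : ℂ) / d) ^ (4 * d) = (d:ℂ) ^ (2*d) / (d:ℂ)^(4*d) := by
    rw [div_pow]
    congr 1
    rw [show 4 * d = 2 * (2 * d) by ring, pow_mul, hs2]
  rw [smul_eq_mul, hpow]
  have hd1 : 1 ≤ d := by omega
  rw [show 2*d-1 = 2*d - 1 from rfl]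
  field_simp
  rw [show 4*d = (2*d) + ((2*d-1) + 1) by omega, pow_add, pow_add, pow_one]
  ring
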